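/- Let R be an infinite relational structure whose profile φ_R takes finite values. Then φ_R is non-decreasing: φ_R(n) ≤ φ_R(n+1) for all n. -/

import Mathlib

/-- A relational structure on a base set (type) `E`: a family of finitary relations on `E`. -/
structure RelStruct (E : Type*) where
  ι : Type*
  arity : ι → ℕ
  rel : ∀ i : ι, (Fin (arity i) → E) → Prop

/-- The substructures induced by `R` on `A` and `B` are isomorphic: there is a bijection
`A ≃ B` transporting every relation of `R` restricted to `A` onto its restriction to `B`. -/
def RelStruct.Iso {E : Type*} (R : RelStruct E) (A B : Set E) : Prop :=
  ∃ e : A ≃ B, ∀ (i : R.ι) (v : Fin (R.arity i) → A),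
    R.rel i (fun j => (v j : E)) ↔ R.rel i (fun j => (e (v j) : E))

/-- `F` is a monomorphic part of `R`: any two finite subsets of the same cardinality which
agree outside `F` induce isomorphic substructures. -/
def IsMonoPart {E : Type*} (R : RelStruct E) (F : Set E) : Prop :=
  ∀ A A' : Set E, A.Finite → A'.Finite → A.ncard = A'.ncard → A \ F = A' \ F →
    R.Iso A A'

/-- A collection `P` of subsets of `E` (a set partition of `E`) is a monomorphic
decomposition of `R` if any two finite subsets meeting every block in the same number of
elements induce isomorphic substructures. -/
def IsMonoDecomp {E : Type*} (R : RelStruct E) (P : Set (Set E)) : Prop :=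
  ∀ A A' : Set E, A.Finite → A'.Finite →
    (∀ p ∈ P, (A ∩ p).ncard = (A' ∩ p).ncard) → R.Iso A A'

/-- Indexed variant: a family `(B x)_{x ∈ X}` of subsets of `E` is a monomorphic
decomposition of `R` if any two finite subsets meeting every block in the same number of
elements induce isomorphic substructures. -/
def IsMonoDecompFam {E : Type*} {X : Type*} (R : RelStruct E) (B : X → Set E) : Prop :=
  ∀ A A' : Set E, A.Finite → A'.Finite →
    (∀ x : X, (A ∩ B x).ncard = (A' ∩ B x).ncard) → R.Iso A A'

/-- The space of isomorphism types of substructures of `R` induced on `n`-element subsets: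
the quotient of the `n`-element finite subsets of the base set by induced isomorphism. -/
def ProfileSpace {E : Type*} (R : RelStruct E) (n : ℕ) : Type _ :=
  Quot fun A B : {A : Set E // A.Finite ∧ A.ncard = n} => R.Iso A.1 B.1

/-- The profile of `R`: the number of isomorphism types of `n`-element induced substructures. -/
noncomputable def profile {E : Type*} (R : RelStruct E) (n : ℕ) : ℕ :=
  Nat.card (ProfileSpace R n)



section Ramsey
variable {α : Type*} {κ : Type*} [DecidableEq α]

theorem myRamsey [Finite κ] : ∀ (s : ℕ) (χ : Finset α → κ) (X : Set α), X.Infinite →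
    ∃ H ⊆ X, H.Infinite ∧ ∀ u v : Finset α, ↑u ⊆ H → ↑v ⊆ H →
      u.card = s → v.card = s → χ u = χ v := by
  intro s
  induction s with
  | zero =>
    intro χ X hX
    exact ⟨X, Set.Subset.rfl, hX, fun u v _ _ hu hv => by
      rw [Finset.card_eq_zero] at hu hv; rw [hu, hv]⟩
  | succ s ih =>
    intro χ X hX
    have step : ∀ Y : {Y : Set α // Y.Infinite}, ∃ p : α × κ × {Z : Set α // Z.Infinite},
        p.1 ∈ Y.1 ∧ p.2.2.1 ⊆ Y.1 \ {p.1} ∧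
        ∀ u : Finset α, ↑u ⊆ p.2.2.1 → u.card = s → χ (insert p.1 u) = p.2.1 := by
      rintro ⟨Y, hY⟩
      obtain ⟨a, ha⟩ := hY.nonempty
      have hY' : (Y \ {a}).Infinite := hY.diff (Set.finite_singleton a)
      obtain ⟨Z, hZsub, hZinf, hhom⟩ := ih (fun u => χ (insert a u)) (Y \ {a}) hY'
      obtain ⟨u₀, hu₀, hu₀c⟩ := hZinf.exists_subset_card_eq s
      exact ⟨⟨a, χ (insert a u₀), ⟨Z, hZinf⟩⟩, ha, hZsub,
        fun u hu huc => hhom u u₀ hu hu₀ huc hu₀c⟩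
    choose F h1 h2 h3 using step
    set seq : ℕ → {Y : Set α // Y.Infinite} :=
      fun i => Nat.rec ⟨X, hX⟩ (fun _ Y => (F Y).2.2) i with hseq
    set a : ℕ → α := fun i => (F (seq i)).1 with haa
    set k : ℕ → κ := fun i => (F (seq i)).2.1 with hkk
    have hseqsucc : ∀ i, seq (i + 1) = (F (seq i)).2.2 := fun i => rfl
    have ha : ∀ i, a i ∈ (seq i).1 := fun i => h1 (seq i)
    have hsub : ∀ i, (seq (i + 1)).1 ⊆ (seq i).1 \ {a i} := fun i => h2 (seq i)
    have hhom : ∀ i (u : Finset α), ↑u ⊆ (seq (i + 1)).1 → u.card = s →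
        χ (insert (a i) u) = k i := fun i => h3 (seq i)
    have mono : ∀ i j, i ≤ j → (seq j).1 ⊆ (seq i).1 := by
      intro i j hij
      induction j with
      | zero => cases Nat.le_zero.mp hij; exact Set.Subset.rfl
      | succ j ihj =>
        rcases Nat.lt_or_ge i (j+1) with h | h
        · exact ((hsub j).trans Set.diff_subset).trans (ihj (Nat.lt_succ_iff.mp h))
        · cases Nat.le_antisymm hij h; exact Set.Subset.rfl
    have hmem : ∀ i j, i < j → a j ∈ (seq i).1 \ {a i} := by
      intro i j hij
      exact hsub i (mono (i+1) j hij ((ha j)))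
    have hainj : Function.Injective a := by
      intro i j hij
      by_contra hne
      rcases Nat.lt_or_ge i j with h | h
      · exact (hmem i j h).2 (hij.symm ▸ rfl)
      · exact (hmem j i (Nat.lt_of_le_of_ne h (Ne.symm hne))).2 (hij ▸ rfl)
    obtain ⟨k₀, hk₀⟩ := Finite.exists_infinite_fiber k
    have hI : (k ⁻¹' {k₀}).Infinite := Set.infinite_coe_iff.mp hk₀
    refine ⟨a '' (k ⁻¹' {k₀}), ?_, hI.image (hainj.injOn), ?_⟩
    · rintro x ⟨i, _, rfl⟩
      exact mono 0 i (Nat.zero_le i) (ha i)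
    · have key : ∀ u : Finset α, ↑u ⊆ a '' (k ⁻¹' {k₀}) → u.card = s + 1 → χ u = k₀ := by
        intro u hu huc
        have hex : ∀ x ∈ u, ∃ i, k i = k₀ ∧ a i = x := by
          intro x hx
          obtain ⟨i, hi, rfl⟩ := hu hx
          exact ⟨i, hi, rfl⟩
        choose idx hidxk hidxa using hex
        have hune : u.Nonempty := Finset.card_pos.mp (by omega)
        set J : Finset ℕ := u.attach.image (fun x => idx x.1 x.2) with hJ
        have hJne : J.Nonempty := (Finset.attach_nonempty_iff.mpr hune).image _
        set i₀ := J.min' hJne with hi₀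
        obtain ⟨x₀, hx₀mem, hx₀⟩ := Finset.mem_image.mp (J.min'_mem hJne)
        rw [← hi₀] at hx₀
        have hai₀ : a i₀ ∈ u := by rw [← hx₀, hidxa]; exact x₀.2
        have hu' : ∀ x ∈ u.erase (a i₀), x ∈ (seq (i₀ + 1)).1 := by
          intro x hx
          have hxu := Finset.mem_of_mem_erase hx
          have hxne := Finset.ne_of_mem_erase hx
          have hidxmem : idx x hxu ∈ J := Finset.mem_image.mpr ⟨⟨x, hxu⟩, Finset.mem_attach _ _, rfl⟩
          have hle : i₀ ≤ idx x hxu := J.min'_le _ hidxmem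
          have hgt : i₀ < idx x hxu := by
            rcases Nat.lt_or_ge i₀ (idx x hxu) with h | h
            · exact h
            · exfalso
              have heq : idx x hxu = i₀ := Nat.le_antisymm h hle
              exact hxne (by rw [← hidxa x hxu, heq, ← hx₀, hidxa])
          have := mono (i₀ + 1) (idx x hxu) hgt (ha (idx x hxu))
          rw [hidxa x hxu] at this
          exact this
        have hcard : (u.erase (a i₀)).card = s := by
          rw [Finset.card_erase_of_mem hai₀, huc]
          omega
        have : χ (insert (a i₀) (u.erase (a i₀))) = k i₀ := hhom i₀ _ hu' hcard
        rw [Finset.insert_erase hai₀] at this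
        rw [this, ← hx₀]
        exact hidxk x₀ x₀.2
      intro u v hu hv huc hvc
      rw [key u hu huc, key v hv hvc]
end Ramsey


namespace CamAux
variable {α : Type*} {β : Type*} [AddCommMonoid β] [DecidableEq α]

lemma count_between {M A : Finset α} (hA : A ⊆ M) {n m : ℕ} (hn : A.card = n) (hnm : n ≤ m) :
    ((M.powersetCard m).filter (fun B => A ⊆ B)).card = (M.card - n).choose (m - n) := by
  have key : ((M.powersetCard m).filter (fun B => A ⊆ B)).card =
      ((M \ A).powersetCard (m - n)).card := by
    apply Finset.card_nbij' (fun B => B \ A) (fun S => S ∪ A)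
    · intro B hB
      simp only [Finset.mem_coe, Finset.mem_filter, Finset.mem_powersetCard] at hB
      obtain ⟨⟨hBM, hBc⟩, hAB⟩ := hB
      simp only [Finset.mem_coe, Finset.mem_powersetCard]
      exact ⟨Finset.sdiff_subset_sdiff hBM Finset.Subset.rfl,
        by rw [Finset.card_sdiff_of_subset hAB, hBc, hn]⟩
    · intro S hS
      simp only [Finset.mem_coe, Finset.mem_powersetCard] at hS
      obtain ⟨hSsub, hSc⟩ := hS
      have hdisj : Disjoint S A := Finset.disjoint_of_subset_left hSsub (Finset.sdiff_disjoint)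
      simp only [Finset.mem_coe, Finset.mem_filter, Finset.mem_powersetCard]
      refine ⟨⟨Finset.union_subset (hSsub.trans (Finset.sdiff_subset)) hA, ?_⟩,
        Finset.subset_union_right⟩
      rw [Finset.card_union_of_disjoint hdisj, hSc, hn]
      omega
    · intro B hB
      simp only [Finset.mem_coe, Finset.mem_filter, Finset.mem_powersetCard] at hB
      exact Finset.sdiff_union_of_subset hB.2
    · intro S hS
      simp only [Finset.mem_coe, Finset.mem_powersetCard] at hS
      have hdisj : Disjoint S A := Finset.disjoint_of_subset_left hS.1 (Finset.sdiff_disjoint)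
      beta_reduce
      rw [Finset.union_sdiff_right, Finset.sdiff_eq_self_of_disjoint hdisj]
  rw [key, Finset.card_powersetCard, Finset.card_sdiff_of_subset hA, hn]

lemma double_count (f : Finset α → β) (M : Finset α) {n m : ℕ} (hnm : n ≤ m) :
    ∑ B ∈ M.powersetCard m, ∑ A ∈ B.powersetCard n, f A =
      ∑ A ∈ M.powersetCard n, ((M.card - n).choose (m - n)) • f A := by
  have h1 : ∀ B ∈ M.powersetCard m, ∑ A ∈ B.powersetCard n, f A =
      ∑ A ∈ (M.powersetCard n).filter (fun A => A ⊆ B), f A := by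
    intro B hB
    rw [Finset.mem_powersetCard] at hB
    congr 1
    ext A
    simp only [Finset.mem_powersetCard, Finset.mem_filter]
    constructor
    · rintro ⟨h1, h2⟩; exact ⟨⟨h1.trans hB.1, h2⟩, h1⟩
    · rintro ⟨⟨_, h2⟩, h3⟩; exact ⟨h3, h2⟩
  rw [Finset.sum_congr rfl h1]
  simp only [Finset.sum_filter]
  rw [Finset.sum_comm]
  apply Finset.sum_congr rfl
  intro A hA
  rw [Finset.mem_powersetCard] at hA
  rw [← Finset.sum_filter, Finset.sum_const, count_between hA.1 hA.2 hnm]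

lemma sum_powersetCard_union {u v : Finset α} (h : Disjoint u v) (g : Finset α → β) (n : ℕ) :
    ∑ w ∈ (u ∪ v).powersetCard n, g w =
      ∑ j ∈ Finset.range (n + 1), ∑ D ∈ u.powersetCard j, ∑ S ∈ v.powersetCard (n - j),
        g (D ∪ S) := by
  have hmaps : ∀ w ∈ (u ∪ v).powersetCard n, (w ∩ u).card ∈ Finset.range (n + 1) := by
    intro w hw
    rw [Finset.mem_powersetCard] at hw
    rw [Finset.mem_range]
    have := Finset.card_le_card (Finset.inter_subset_left (s₂ := u) (s₁ := w))
    omega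
  rw [← Finset.sum_fiberwise_of_maps_to hmaps]
  apply Finset.sum_congr rfl
  intro j hj
  rw [Finset.mem_range] at hj
  rw [← Finset.sum_product']
  apply Finset.sum_nbij' (fun w => (w ∩ u, w ∩ v)) (fun p => p.1 ∪ p.2)
  · intro w hw
    simp only [Finset.mem_filter, Finset.mem_powersetCard] at hw
    obtain ⟨⟨hwsub, hwc⟩, hwj⟩ := hw
    have hsplit : (w ∩ u) ∪ (w ∩ v) = w := by
      rw [← Finset.inter_union_distrib_left]
      exact Finset.inter_eq_left.mpr hwsub
    have hdisj : Disjoint (w ∩ u) (w ∩ v) :=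
      Finset.disjoint_of_subset_left Finset.inter_subset_right
        (Finset.disjoint_of_subset_right Finset.inter_subset_right h)
    have hcards : (w ∩ u).card + (w ∩ v).card = n := by
      rw [← Finset.card_union_of_disjoint hdisj, hsplit, hwc]
    simp only [Finset.mem_product, Finset.mem_powersetCard]
    exact ⟨⟨Finset.inter_subset_right, hwj⟩, ⟨Finset.inter_subset_right, by omega⟩⟩
  · intro p hp
    simp only [Finset.mem_product, Finset.mem_powersetCard] at hp
    obtain ⟨⟨h1, h2⟩, ⟨h3, h4⟩⟩ := hp
    have hdisj : Disjoint p.1 p.2 :=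
      Finset.disjoint_of_subset_left h1 (Finset.disjoint_of_subset_right h3 h)
    simp only [Finset.mem_filter, Finset.mem_powersetCard]
    have hp2u : p.2 ∩ u = ∅ :=
      Finset.disjoint_iff_inter_eq_empty.mp (Finset.disjoint_of_subset_left h3 h.symm)
    refine ⟨⟨Finset.union_subset (h1.trans Finset.subset_union_left)
      (h3.trans Finset.subset_union_right), ?_⟩, ?_⟩
    · rw [Finset.card_union_of_disjoint hdisj]; omega
    · rw [Finset.union_inter_distrib_right, Finset.inter_eq_left.mpr h1, hp2u,
        Finset.union_empty]
      exact h2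
  · intro w hw
    simp only [Finset.mem_filter, Finset.mem_powersetCard] at hw
    rw [← Finset.inter_union_distrib_left]
    exact Finset.inter_eq_left.mpr hw.1.1
  · intro p hp
    simp only [Finset.mem_product, Finset.mem_powersetCard] at hp
    obtain ⟨⟨h1, h2⟩, ⟨h3, h4⟩⟩ := hp
    have hp2u : p.2 ∩ u = ∅ :=
      Finset.disjoint_iff_inter_eq_empty.mp (Finset.disjoint_of_subset_left h3 h.symm)
    have hp1v : p.1 ∩ v = ∅ :=
      Finset.disjoint_iff_inter_eq_empty.mp (Finset.disjoint_of_subset_left h1 h)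
    have e1 : (p.1 ∪ p.2) ∩ u = p.1 := by
      rw [Finset.union_inter_distrib_right, Finset.inter_eq_left.mpr h1, hp2u,
        Finset.union_empty]
    have e2 : (p.1 ∪ p.2) ∩ v = p.2 := by
      rw [Finset.union_inter_distrib_right, Finset.inter_eq_left.mpr h3, hp1v,
        Finset.empty_union]
    exact Prod.ext e1 e2
  · intro w hw
    simp only [Finset.mem_filter, Finset.mem_powersetCard] at hw
    congr 1
    rw [← Finset.inter_union_distrib_left]
    exact (Finset.inter_eq_left.mpr hw.1.1).symm


lemma binom_zero : ∀ (m : ℕ) (s : ℕ → ℚ),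
    (∀ k : ℕ, 1 ≤ k → ∑ i ∈ Finset.range (m + 1), (k.choose i : ℚ) * s i = 0) →
    ∀ i ≤ m, s i = 0 := by
  intro m
  induction m with
  | zero =>
    intro s h i hi
    interval_cases i
    have := h 1 le_rfl
    simpa using this
  | succ m ih =>
    intro s h
    have hshift : ∀ k : ℕ, 1 ≤ k →
        ∑ i ∈ Finset.range (m + 1), (k.choose i : ℚ) * s (i + 1) = 0 := by
      intro k hk
      have h1 := h (k + 1) (by omega)
      have h2 := h k hk
      rw [Finset.sum_range_succ' _ (m + 1)] at h1 h2
      simp only [Nat.choose_zero_right, Nat.cast_one, one_mul] at h1 h2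
      have e1 : ∀ i, ((k + 1).choose (i + 1) : ℚ) = (k.choose i : ℚ) + (k.choose (i + 1) : ℚ) := by
        intro i
        rw [Nat.choose_succ_succ']
        push_cast
        ring
      rw [Finset.sum_congr rfl (fun i _ => by rw [e1 i, add_mul])] at h1
      rw [Finset.sum_add_distrib] at h1
      have := sub_eq_zero.mpr (h1.trans h2.symm)
      -- h1 : (Σ k.choose i * s (i+1) + Σ k.choose (i+1) * s (i+1)) + s 0 = 0
      -- h2 : Σ k.choose (i+1) * s(i+1) + s 0 = 0
      linarith [h1, h2]
    have htail : ∀ i ≤ m, s (i + 1) = 0 := ih (fun i => s (i + 1)) hshift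
    have hzero : s 0 = 0 := by
      have h1 := h 1 le_rfl
      rw [Finset.sum_range_succ' _ (m + 1)] at h1
      rw [Finset.sum_congr rfl (fun i hi => by
        rw [htail i (by have := Finset.mem_range.mp hi; omega), mul_zero])] at h1
      simpa using h1
    intro i hi
    cases i with
    | zero => exact hzero
    | succ j => exact htail j (by omega)



variable {E : Type*} (R : RelStruct E)

theorem iso_refl (A : Set E) : R.Iso A A := ⟨Equiv.refl A, fun _ _ => Iff.rfl⟩

theorem iso_symm {A B : Set E} (h : R.Iso A B) : R.Iso B A := by
  obtain ⟨e, he⟩ := h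
  refine ⟨e.symm, fun i v => ?_⟩
  have := (he i (fun j => e.symm (v j))).symm
  simpa using this

theorem iso_trans {A B C : Set E} (h₁ : R.Iso A B) (h₂ : R.Iso B C) : R.Iso A C := by
  obtain ⟨e₁, he₁⟩ := h₁
  obtain ⟨e₂, he₂⟩ := h₂
  exact ⟨e₁.trans e₂, fun i v => (he₁ i v).trans (he₂ i (fun j => e₁ (v j)))⟩

theorem iso_equiv (n : ℕ) :
    Equivalence (fun A B : {A : Set E // A.Finite ∧ A.ncard = n} => R.Iso A.1 B.1) :=
  ⟨fun A => iso_refl R A.1, fun h => iso_symm R h, fun h₁ h₂ => iso_trans R h₁ h₂⟩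

/-- The isomorphism type of a finset of cardinality `n`, as element of `ProfileSpace`. -/
noncomputable def omap (n : ℕ) (s : Finset E) : Option (ProfileSpace R n) :=
  if h : s.card = n then
    some (Quot.mk _ ⟨(s : Set E), s.finite_toSet, by rw [Set.ncard_coe_finset]; exact h⟩)
  else none

noncomputable def fc (n : ℕ) (c : ProfileSpace R n → ℚ) (s : Finset E) : ℚ :=
  (omap R n s).elim 0 c

lemma fc_invariant (n : ℕ) (c : ProfileSpace R n → ℚ) {s t : Finset E}
    (hs : s.card = n) (ht : t.card = n) (h : R.Iso ↑s ↑t) :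
    fc R n c s = fc R n c t := by
  unfold fc omap
  rw [dif_pos hs, dif_pos ht]
  exact congrArg c (Quot.sound h)

/-- Transporting subsets along a witness of an isomorphism. -/
theorem key_maps [DecidableEq E] {M N : Finset E} (h : R.Iso ↑M ↑N) :
    ∃ g g' : E → E, (∀ x ∈ M, g x ∈ N) ∧ (∀ y ∈ N, g' y ∈ M) ∧
      (∀ x ∈ M, g' (g x) = x) ∧ (∀ y ∈ N, g (g' y) = y) ∧
      (∀ A : Finset E, A ⊆ M → R.Iso ↑A ↑(A.image g)) := by
  classical
  obtain ⟨e, he⟩ := h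
  set g : E → E := fun x => if h : x ∈ (↑M : Set E) then (e ⟨x, h⟩ : E) else x with hg
  set g' : E → E := fun y => if h : y ∈ (↑N : Set E) then (e.symm ⟨y, h⟩ : E) else y with hg'
  have hgval : ∀ x (hx : x ∈ M), g x = (e ⟨x, hx⟩ : E) := by
    intro x hx; simp only [hg]; rw [dif_pos (Finset.mem_coe.mpr hx)]
  have hg'val : ∀ y (hy : y ∈ N), g' y = (e.symm ⟨y, hy⟩ : E) := by
    intro y hy; simp only [hg']; rw [dif_pos (Finset.mem_coe.mpr hy)]
  have hgN : ∀ x ∈ M, g x ∈ N := by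
    intro x hx; rw [hgval x hx]; exact (e ⟨x, hx⟩).2
  have hg'M : ∀ y ∈ N, g' y ∈ M := by
    intro y hy; rw [hg'val y hy]; exact (e.symm ⟨y, hy⟩).2
  have hgg' : ∀ x ∈ M, g' (g x) = x := by
    intro x hx
    rw [hgval x hx] at *
    rw [hg'val _ ((e ⟨x, hx⟩).2)]
    have : (⟨(e ⟨x, hx⟩ : E), (e ⟨x, hx⟩).2⟩ : (↑N : Set E)) = e ⟨x, hx⟩ := rfl
    rw [this, Equiv.symm_apply_apply]
  have hg'g : ∀ y ∈ N, g (g' y) = y := by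
    intro y hy
    rw [hg'val y hy] at *
    rw [hgval _ ((e.symm ⟨y, hy⟩).2)]
    have : (⟨(e.symm ⟨y, hy⟩ : E), (e.symm ⟨y, hy⟩).2⟩ : (↑M : Set E)) = e.symm ⟨y, hy⟩ := rfl
    rw [this, Equiv.apply_symm_apply]
  refine ⟨g, g', hgN, hg'M, hgg', hg'g, ?_⟩
  intro A hA
  have hinj : Set.InjOn g ↑A := by
    intro x hx y hy hxy
    have hx' := hA (Finset.mem_coe.mp hx)
    have hy' := hA (Finset.mem_coe.mp hy)
    rw [← hgg' x hx', ← hgg' y hy', hxy]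
  have hmem : ∀ x : (↑A : Set E), (g x : E) ∈ (↑(A.image g) : Set E) := by
    intro x
    exact Finset.mem_coe.mpr (Finset.mem_image_of_mem g (Finset.mem_coe.mp x.2))
  set φ : (↑A : Set E) → (↑(A.image g) : Set E) := fun x => ⟨g x, hmem x⟩ with hφ
  have hbij : Function.Bijective φ := by
    constructor
    · intro x y hxy
      exact Subtype.ext (hinj x.2 y.2 (congrArg Subtype.val hxy))
    · rintro ⟨y, hy⟩
      obtain ⟨x, hx, rfl⟩ := Finset.mem_image.mp (Finset.mem_coe.mp hy)
      exact ⟨⟨x, Finset.mem_coe.mpr hx⟩, rfl⟩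
  refine ⟨Equiv.ofBijective φ hbij, fun i v => ?_⟩
  have hv : ∀ j, ((v j : E)) ∈ (↑M : Set E) := fun j =>
    Finset.mem_coe.mpr (hA (Finset.mem_coe.mp (v j).2))
  have := he i (fun j => ⟨v j, hv j⟩)
  convert this using 2
  funext j
  show (φ (v j) : E) = _
  simp only [hφ]
  exact hgval _ (hA (Finset.mem_coe.mp (v j).2))

noncomputable def Fsum (n : ℕ) (c : ProfileSpace R n → ℚ) (M : Finset E) : ℚ :=
  ∑ A ∈ M.powersetCard n, fc R n c A

lemma Fsum_invariant [DecidableEq E] (n : ℕ) (c : ProfileSpace R n → ℚ) {M N : Finset E}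
    (h : R.Iso ↑M ↑N) : Fsum R n c M = Fsum R n c N := by
  obtain ⟨g, g', hgN, hg'M, hgg', hg'g, hiso⟩ := key_maps R h
  have hinjM : ∀ A : Finset E, A ⊆ M → Set.InjOn g ↑A := by
    intro A hA x hx y hy hxy
    rw [← hgg' x (hA hx), ← hgg' y (hA hy), hxy]
  have hinjN : ∀ B : Finset E, B ⊆ N → Set.InjOn g' ↑B := by
    intro B hB x hx y hy hxy
    rw [← hg'g x (hB hx), ← hg'g y (hB hy), hxy]
  unfold Fsum
  apply Finset.sum_nbij' (fun A => A.image g) (fun B => B.image g')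
  · intro A hA
    rw [Finset.mem_powersetCard] at hA ⊢
    refine ⟨fun y hy => ?_, by rw [Finset.card_image_of_injOn (hinjM A hA.1), hA.2]⟩
    obtain ⟨x, hx, rfl⟩ := Finset.mem_image.mp hy
    exact hgN x (hA.1 hx)
  · intro B hB
    rw [Finset.mem_powersetCard] at hB ⊢
    refine ⟨fun y hy => ?_, by rw [Finset.card_image_of_injOn (hinjN B hB.1), hB.2]⟩
    obtain ⟨x, hx, rfl⟩ := Finset.mem_image.mp hy
    exact hg'M x (hB.1 hx)
  · intro A hA
    rw [Finset.mem_powersetCard] at hA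
    rw [Finset.image_image]
    rw [show Finset.image (g' ∘ g) A = Finset.image id A from
      Finset.image_congr (fun x hx => hgg' x (hA.1 hx)), Finset.image_id]
  · intro B hB
    rw [Finset.mem_powersetCard] at hB
    rw [Finset.image_image]
    rw [show Finset.image (g ∘ g') B = Finset.image id B from
      Finset.image_congr (fun x hx => hg'g x (hB.1 hx)), Finset.image_id]
  · intro A hA
    rw [Finset.mem_powersetCard] at hA
    exact fc_invariant R n c hA.2
      (by rw [Finset.card_image_of_injOn (hinjM A hA.1), hA.2]) (hiso A hA.1)

noncomputable def repFinset (n : ℕ) (σ : ProfileSpace R n) : Finset E :=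
  (Quot.out σ).2.1.toFinset

lemma repFinset_card (n : ℕ) (σ : ProfileSpace R n) : (repFinset R n σ).card = n := by
  have h := (Quot.out σ).2.2
  rw [Set.ncard_eq_toFinset_card _ (Quot.out σ).2.1] at h
  exact h

/-- The canonical element of the subtype attached to a finset of cardinality n. -/
def elt (n : ℕ) (s : Finset E) (hs : s.card = n) : {A : Set E // A.Finite ∧ A.ncard = n} :=
  ⟨(s : Set E), s.finite_toSet, by rw [Set.ncard_coe_finset]; exact hs⟩

noncomputable def mkT (n : ℕ) (s : Finset E) (hs : s.card = n) : ProfileSpace R n :=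
  Quot.mk _ (elt n s hs)

lemma iso_repFinset (n : ℕ) (s : Finset E) (hs : s.card = n) :
    R.Iso ↑(repFinset R n (mkT R n s hs)) ↑s := by
  have h1 : Quot.mk (fun A B : {A : Set E // A.Finite ∧ A.ncard = n} => R.Iso A.1 B.1)
      (Quot.out (mkT R n s hs)) = Quot.mk _ (elt n s hs) := Quot.out_eq _
  have h2 := ((iso_equiv R n).eqvGen_iff).mp (Quot.eq.mp h1)
  have h3 : (↑(repFinset R n (mkT R n s hs)) : Set E) =
      (Quot.out (mkT R n s hs)).1 := Set.Finite.coe_toFinset _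
  rw [h3]
  exact h2

lemma stepA [DecidableEq E] (n : ℕ) (c : ProfileSpace R n → ℚ)
    (hc : ∀ σ : ProfileSpace R (n + 1), Fsum R n c (repFinset R (n + 1) σ) = 0) :
    ∀ B : Finset E, B.card = n + 1 → Fsum R n c B = 0 := by
  intro B hB
  have h := hc (mkT R (n + 1) B hB)
  rw [Fsum_invariant R n c (iso_repFinset R (n + 1) B hB)] at h
  exact h

lemma stepB [DecidableEq E] (n : ℕ) (c : ProfileSpace R n → ℚ)
    (h0 : ∀ B : Finset E, B.card = n + 1 → Fsum R n c B = 0) :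
    ∀ (m : ℕ) (M : Finset E), M.card = n + 1 + m → Fsum R n c M = 0 := by
  intro m
  induction m with
  | zero => exact fun M hM => h0 M (by omega)
  | succ m ih =>
    intro M hM
    have hd := double_count (fc R n c) M (show n ≤ n + 1 + m by omega)
    have hzero : ∑ B ∈ M.powersetCard (n + 1 + m), ∑ A ∈ B.powersetCard n, fc R n c A = 0 := by
      apply Finset.sum_eq_zero
      intro B hB
      rw [Finset.mem_powersetCard] at hB
      exact ih B hB.2
    rw [hzero, ← Finset.smul_sum] at hd
    have hC : 0 < (M.card - n).choose (n + 1 + m - n) :=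
      Nat.choose_pos (by omega)
    have := hd.symm
    rw [nsmul_eq_mul] at this
    rcases mul_eq_zero.mp this with h | h
    · exact absurd (Nat.cast_eq_zero.mp h) (by omega)
    · exact h

lemma vanish [Infinite E] [DecidableEq E] (n : ℕ) (hT : Finite (ProfileSpace R n))
    (c : ProfileSpace R n → ℚ)
    (h0 : ∀ M : Finset E, n + 1 ≤ M.card → Fsum R n c M = 0) :
    ∀ s : Finset E, s.card = n → fc R n c s = 0 := by
  intro A hA
  haveI : Finite (ProfileSpace R n) := hT
  haveI : Fintype (ProfileSpace R n) := Fintype.ofFinite _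
  have hAc : ((↑A : Set E)ᶜ).Infinite := (A.finite_toSet).infinite_compl
  set χ : Finset E → ({D : Finset E // D ∈ A.powerset} → Option (ProfileSpace R n)) :=
    fun S => fun D => omap R n (D.1 ∪ S) with hχ
  have iter : ∀ m : ℕ, ∃ H ⊆ ((↑A : Set E)ᶜ), H.Infinite ∧
      ∀ s ≤ m, ∀ u v : Finset E, ↑u ⊆ H → ↑v ⊆ H → u.card = s → v.card = s → χ u = χ v := by
    intro m
    induction m with
    | zero =>
      refine ⟨_, Set.Subset.rfl, hAc, fun s hs u v _ _ hu hv => ?_⟩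
      interval_cases s
      rw [Finset.card_eq_zero] at hu hv
      rw [hu, hv]
    | succ m ih =>
      obtain ⟨H, hHsub, hHinf, hHp⟩ := ih
      obtain ⟨H', hH'sub, hH'inf, hH'p⟩ := myRamsey (m + 1) χ H hHinf
      refine ⟨H', hH'sub.trans hHsub, hH'inf, ?_⟩
      intro s hs u v hu hv huc hvc
      rcases Nat.lt_or_ge s (m + 1) with h | h
      · exact hHp s (by omega) u v (hu.trans hH'sub) (hv.trans hH'sub) huc hvc
      · have hs' : s = m + 1 := by omega
        subst hs'
        exact hH'p u v hu hv huc hvc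
  obtain ⟨H, hHsub, hHinf, hHp⟩ := iter n
  have hS0 : ∀ s : ℕ, ∃ S : Finset E, ↑S ⊆ H ∧ S.card = s := fun s =>
    hHinf.exists_subset_card_eq s
  choose S0 hS0H hS0c using hS0
  set t : ℕ → ℚ := fun j => ∑ D ∈ A.powersetCard j, fc R n c (D ∪ S0 (n - j)) with ht
  have key : ∀ k : ℕ, 1 ≤ k →
      ∑ i ∈ Finset.range (n + 1), (k.choose i : ℚ) * t (n - i) = 0 := by
    intro k hk
    obtain ⟨K, hKH, hKc⟩ := hHinf.exists_subset_card_eq k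
    have hdisj : Disjoint A K := by
      rw [Finset.disjoint_right]
      intro x hx hxA
      exact (hHsub (hKH hx)) (Finset.mem_coe.mpr hxA)
    have hunion : Fsum R n c (A ∪ K) = 0 := by
      apply h0
      rw [Finset.card_union_of_disjoint hdisj, hA, hKc]
      omega
    rw [Fsum, sum_powersetCard_union hdisj (fc R n c) n] at hunion
    have inner : ∀ j ∈ Finset.range (n + 1),
        ∑ D ∈ A.powersetCard j, ∑ S ∈ K.powersetCard (n - j), fc R n c (D ∪ S)
          = (k.choose (n - j) : ℚ) * t j := by
      intro j hj
      rw [Finset.mem_range] at hj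
      simp only [ht]
      rw [Finset.mul_sum]
      apply Finset.sum_congr rfl
      intro D hD
      rw [Finset.mem_powersetCard] at hD
      have hDA : D ∈ A.powerset := Finset.mem_powerset.mpr hD.1
      have hconst : ∀ S ∈ K.powersetCard (n - j),
          fc R n c (D ∪ S) = fc R n c (D ∪ S0 (n - j)) := by
        intro S hS
        rw [Finset.mem_powersetCard] at hS
        have hSH : ↑S ⊆ H := (Finset.coe_subset.mpr hS.1).trans hKH
        have hfun := hHp (n - j) (by omega) S (S0 (n - j)) hSH (hS0H (n - j)) hS.2
          (hS0c (n - j))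
        have homap : omap R n (D ∪ S) = omap R n (D ∪ S0 (n - j)) := by
          simpa [hχ] using congrFun hfun ⟨D, hDA⟩
        unfold fc
        rw [homap]
      rw [Finset.sum_congr rfl hconst, Finset.sum_const, Finset.card_powersetCard, hKc,
        nsmul_eq_mul]
    rw [Finset.sum_congr rfl inner] at hunion
    calc ∑ i ∈ Finset.range (n + 1), (k.choose i : ℚ) * t (n - i)
        = ∑ i ∈ Finset.range (n + 1),
            (k.choose (n - (n + 1 - 1 - i)) : ℚ) * t (n + 1 - 1 - i) := by
          apply Finset.sum_congr rfl
          intro i hi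
          rw [Finset.mem_range] at hi
          rw [show n + 1 - 1 - i = n - i from by omega,
            show n - (n - i) = i from by omega]
      _ = ∑ j ∈ Finset.range (n + 1), (k.choose (n - j) : ℚ) * t j :=
          Finset.sum_range_reflect (fun j => (k.choose (n - j) : ℚ) * t j) (n + 1)
      _ = 0 := hunion
  have hall := binom_zero n (fun i => t (n - i)) key
  have hn0 : t n = 0 := by
    have := hall 0 (Nat.zero_le n)
    simpa using this
  have htn : t n = fc R n c A := by
    simp only [ht]
    have hS00 : S0 (n - n) = ∅ := Finset.card_eq_zero.mp (by rw [hS0c]; omega)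
    rw [hS00]
    rw [show Finset.powersetCard n A = {A} from by rw [← hA, Finset.powersetCard_self]]
    rw [Finset.sum_singleton, Finset.union_empty]
  rw [← htn]
  exact hn0

end CamAux

/-- the profile of an infinite relational structure taking finite values is
non-decreasing: `φ_R(n) ≤ φ_R(n+1)` for all `n`. -/
theorem profile_monotone {E : Type*} [Infinite E] (R : RelStruct E)
    (hfin : ∀ n : ℕ, Finite (ProfileSpace R n)) :
    ∀ n : ℕ, profile R n ≤ profile R (n + 1) := by
  intro n
  classical
  haveI hT : Finite (ProfileSpace R n) := hfin n
  haveI hT' : Finite (ProfileSpace R (n + 1)) := hfin (n + 1)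
  haveI : Fintype (ProfileSpace R n) := Fintype.ofFinite _
  haveI : Fintype (ProfileSpace R (n + 1)) := Fintype.ofFinite _
  rw [profile, profile, Nat.card_eq_fintype_card, Nat.card_eq_fintype_card]
  have hadd : ∀ (c c' : ProfileSpace R n → ℚ) (s : Finset E),
      CamAux.fc R n (c + c') s = CamAux.fc R n c s + CamAux.fc R n c' s := by
    intro c c' s
    unfold CamAux.fc
    cases CamAux.omap R n s <;> simp
  have hsmul : ∀ (q : ℚ) (c : ProfileSpace R n → ℚ) (s : Finset E),
      CamAux.fc R n (q • c) s = q * CamAux.fc R n c s := by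
    intro q c s
    unfold CamAux.fc
    cases CamAux.omap R n s <;> simp
  set L : (ProfileSpace R n → ℚ) →ₗ[ℚ] (ProfileSpace R (n + 1) → ℚ) :=
    { toFun := fun c σ => CamAux.Fsum R n c (CamAux.repFinset R (n + 1) σ)
      map_add' := by
        intro c c'
        funext σ
        unfold CamAux.Fsum
        simp only [hadd, Finset.sum_add_distrib]
        rfl
      map_smul' := by
        intro q c
        funext σ
        unfold CamAux.Fsum
        simp only [hsmul, ← Finset.mul_sum]
        rfl } with hL
  have hker : ∀ c : ProfileSpace R n → ℚ, L c = 0 → c = 0 := by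
    intro c hc
    have h0 : ∀ B : Finset E, B.card = n + 1 → CamAux.Fsum R n c B = 0 := by
      apply CamAux.stepA R n c
      intro σ
      have := congrFun hc σ
      simpa [hL] using this
    have h1 : ∀ M : Finset E, n + 1 ≤ M.card → CamAux.Fsum R n c M = 0 := by
      intro M hM
      exact CamAux.stepB R n c h0 (M.card - (n + 1)) M (by omega)
    have h2 := CamAux.vanish R n hT c h1
    funext σ
    show c σ = 0
    induction σ using Quot.ind with
    | _ x =>
      have hcard : (x.2.1.toFinset).card = n := by
        rw [← Set.ncard_eq_toFinset_card _ x.2.1]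
        exact x.2.2
      have h3 := h2 x.2.1.toFinset hcard
      unfold CamAux.fc CamAux.omap at h3
      rw [dif_pos hcard] at h3
      simp only [Option.elim] at h3
      have hx : (⟨(↑(x.2.1.toFinset) : Set E), (x.2.1.toFinset).finite_toSet,
          by rw [Set.ncard_coe_finset]; exact hcard⟩ :
          {A : Set E // A.Finite ∧ A.ncard = n}) = x := Subtype.ext (x.2.1.coe_toFinset)
      rw [hx] at h3
      exact h3
  have hinj : Function.Injective L := by
    intro c₁ c₂ h
    rw [← sub_eq_zero]
    exact hker (c₁ - c₂) (by rw [map_sub, h, sub_self])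
  calc Fintype.card (ProfileSpace R n)
      = Module.finrank ℚ (ProfileSpace R n → ℚ) := (Module.finrank_pi ℚ).symm
    _ ≤ Module.finrank ℚ (ProfileSpace R (n + 1) → ℚ) :=
        LinearMap.finrank_le_finrank_of_injective hinj
    _ = Fintype.card (ProfileSpace R (n + 1)) := Module.finrank_pi ℚ
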